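/- For every real β > 0 and all integers k, j ≥ 0: ((2k+β)(2j+β) / ((k+β)(j+β))) · ∫_0^1 (d/dr)[J_k^{−1,β}(2r²−1)] · (d/dr)[J_j^{−1,β}(2r²−1)] · r^{2β+1} dr = δ_{k,j} · 2(2k+β) · (1 − δ_{k,0}), where δ denotes the Kronecker delta. -/

import Mathlib

open Real MeasureTheory

/-- Generalized binomial coefficient `C(x,k) = x(x-1)⋯(x-k+1)/k!`. -/
noncomputable def genBinom (x : ℝ) (k : ℕ) : ℝ :=
  (descPochhammer ℝ k).eval x / (Nat.factorial k : ℝ)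

/-- Generalized Jacobi polynomial `J_n^{α,β}(ζ)`. -/
noncomputable def genJacobi (α β : ℝ) (n : ℕ) (ζ : ℝ) : ℝ :=
  ∑ m ∈ Finset.range (n + 1),
    genBinom ((n : ℝ) + α) (n - m) * genBinom ((n : ℝ) + β) m *
      ((ζ - 1) / 2) ^ m * ((ζ + 1) / 2) ^ (n - m)

set_option maxHeartbeats 1000000

section Aux
open Polynomial

noncomputable def dP (x : ℝ) (k : ℕ) : ℝ := (descPochhammer ℝ k).eval x

lemma gb_def (x : ℝ) (k : ℕ) : genBinom x k = dP x k / (Nat.factorial k : ℝ) := rfl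

lemma dP_zero (x : ℝ) : dP x 0 = 1 := by simp [dP]

lemma dP_one (x : ℝ) : dP x 1 = x := by simp [dP, descPochhammer_one]

lemma dP_succ (x : ℝ) (k : ℕ) : dP x (k + 1) = dP x k * (x - k) := by
  simp [dP, descPochhammer_succ_eval]

lemma dP_succ_left (x : ℝ) (k : ℕ) : dP x (k + 1) = x * dP (x - 1) k := by
  simp [dP, descPochhammer_succ_left, Polynomial.eval_comp]

lemma dP_split (x : ℝ) (i l : ℕ) : dP x (i + l) = dP x i * dP (x - i) l := by
  induction l with
  | zero => simp [dP_zero]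
  | succ l ih =>
      rw [← Nat.add_assoc, dP_succ, ih, dP_succ]
      push_cast
      ring

lemma dP_pos {x : ℝ} {k : ℕ} (h : ∀ i : ℕ, i < k → 0 < x - i) : 0 < dP x k := by
  induction k with
  | zero => rw [dP_zero]; norm_num
  | succ k ih =>
      rw [dP_succ]
      exact mul_pos (ih fun i hi => h i (hi.trans (Nat.lt_succ_self k)))
        (h k (Nat.lt_succ_self k))

lemma dP_nat (n k : ℕ) : dP (n : ℝ) k = (n.descFactorial k : ℝ) := by
  simp [dP, descPochhammer_eval_eq_descFactorial]

lemma dP_nat_zero {n k : ℕ} (h : n < k) : dP (n : ℝ) k = 0 := by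
  rw [dP_nat, Nat.descFactorial_eq_zero_iff_lt.mpr h, Nat.cast_zero]

lemma gb_nat (n k : ℕ) : genBinom (n : ℝ) k = (n.choose k : ℝ) := by
  rw [gb_def, dP_nat, Nat.descFactorial_eq_factorial_mul_choose]
  push_cast
  rw [mul_comm, mul_div_assoc, div_self (by positivity), mul_one]

lemma gb_mul_factorial (x : ℝ) (k : ℕ) :
    genBinom x k * (Nat.factorial k : ℝ) = dP x k := by
  rw [gb_def, div_mul_cancel₀]
  positivity

lemma gb_zero (x : ℝ) : genBinom x 0 = 1 := by simp [gb_def, dP_zero]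

lemma gb_pascal (x : ℝ) (k : ℕ) :
    genBinom (x + 1) (k + 1) = genBinom x (k + 1) + genBinom x k := by
  have h1 : dP (x + 1) (k + 1) = dP x (k + 1) + (k + 1) * dP x k := by
    rw [dP_succ_left, add_sub_cancel_right, dP_succ]
    ring
  have h2 := gb_mul_factorial (x+1) (k+1)
  have h3 := gb_mul_factorial x (k+1)
  have h4 := gb_mul_factorial x k
  have hf : (Nat.factorial (k+1) : ℝ) = (k+1) * Nat.factorial k := by
    push_cast [Nat.factorial_succ]; ring
  have hk : (Nat.factorial k : ℝ) ≠ 0 := by positivity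
  have hk1 : (Nat.factorial (k+1) : ℝ) ≠ 0 := by positivity
  rw [gb_def, gb_def, gb_def, h1, hf]
  field_simp

lemma PF : ∀ (m : ℕ) (z : ℝ), 0 < z →
    ∑ i ∈ Finset.range (m+1), (m.choose i : ℝ) * (-1)^(m-i) * (1/(z+i)) =
      (-1)^m * (Nat.factorial m : ℝ) / dP (z + m) (m+1) := by
  intro m
  induction m with
  | zero => intro z hz; simp [dP_one]
  | succ m ih =>
    intro z hz
    have hz1 : (0:ℝ) < z + 1 := by linarith
    have hdm : 0 < dP (z + m) m := by
      apply dP_pos; intro i hi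
      have : (i:ℝ) < m := by exact_mod_cast hi
      linarith
    show (∑ i ∈ Finset.range (m+1+1),
        (((m+1).choose i : ℕ) : ℝ) * (-1)^(m+1-i) * (1/(z+i))) = _
    have key : ∀ i ∈ Finset.range (m+1),
        (((m+1).choose (i+1) : ℕ) : ℝ) * (-1)^(m+1-(i+1)) * (1/(z+(i+1:ℕ))) =
        ((m.choose i : ℝ) * (-1)^(m-i) * (1/((z+1)+i)))
        + ((m.choose (i+1) : ℝ) * (-1)^(m+1-(i+1)) * (1/(z+((i+1:ℕ):ℝ)))) := by
      intro i hi
      have h1 : m + 1 - (i+1) = m - i := by omega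
      rw [Nat.choose_succ_succ, h1]
      push_cast
      ring
    rw [Finset.sum_range_succ', Finset.sum_congr rfl key, Finset.sum_add_distrib]
    have sG : (∑ i ∈ Finset.range (m+1),
          (m.choose (i+1) : ℝ) * (-1)^(m+1-(i+1)) * (1/(z+((i+1:ℕ):ℝ))))
        + (((m+1).choose 0 : ℕ) : ℝ) * (-1)^(m+1-0) * (1/(z+((0:ℕ):ℝ))) =
        - ((-1)^m * (Nat.factorial m : ℝ) / dP (z + m) (m+1)) := by
      have h0 : (((m+1).choose 0 : ℕ) : ℝ) * (-1)^(m+1-0) * (1/(z+((0:ℕ):ℝ))) =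
          (m.choose 0 : ℝ) * (-1)^(m+1-0) * (1/(z+((0:ℕ):ℝ))) := by norm_num
      rw [h0, ← Finset.sum_range_succ'
        (fun i => (m.choose i : ℝ) * (-1)^(m+1-i) * (1/(z+(i:ℝ)))) (m+1)]
      rw [Finset.sum_range_succ, Nat.choose_succ_self]
      rw [← ih z hz, ← Finset.sum_neg_distrib]
      simp only [Nat.cast_zero, zero_mul, mul_zero, add_zero]
      refine Finset.sum_congr rfl ?_
      intro i hi
      have hi' : i ≤ m := Nat.lt_succ_iff.mp (Finset.mem_range.mp hi)
      have h2 : m + 1 - i = (m - i) + 1 := by omega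
      rw [h2, pow_succ]
      ring
    rw [add_assoc, sG, ih (z+1) hz1]
    have dA : dP (z+1+m) (m+1) = (z+m+1) * dP (z+m) m := by
      have := dP_succ_left (z+1+m) m
      rw [this]; ring_nf
    have dB : dP (z+m) (m+1) = dP (z+m) m * z := by
      rw [dP_succ]; ring_nf
    have dC : dP (z+(m+1:ℕ)) (m+1+1) = (z+m+1) * (dP (z+m) m * z) := by
      push_cast
      rw [show z + ((m:ℝ)+1) = z + (m:ℝ) + 1 by ring, dP_succ_left,
        show z + (m:ℝ) + 1 - 1 = z + (m:ℝ) by ring, dB]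
    rw [dA, dB, dC]
    have hf : (Nat.factorial (m+1) : ℝ) = (m+1) * Nat.factorial m := by
      push_cast [Nat.factorial_succ]; ring
    rw [hf, pow_succ]
    have hzm1 : z + (m:ℝ) + 1 ≠ 0 := by positivity
    field_simp
    ring

lemma dP_ne_zero {x : ℝ} {k : ℕ} (h : ∀ i : ℕ, i < k → x - i ≠ 0) : dP x k ≠ 0 := by
  induction k with
  | zero => rw [dP_zero]; norm_num
  | succ k ih =>
      rw [dP_succ]
      exact mul_ne_zero (ih fun i hi => h i (hi.trans (Nat.lt_succ_self k)))
        (h k (Nat.lt_succ_self k))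

lemma Gpoly : ∀ (N : ℕ) (x y : ℝ),
    ∑ i ∈ Finset.range (N+1),
      (N.choose i : ℝ) * (-1)^i * dP x i * dP (y - i) (N - i) = dP (y - x) N := by
  intro N
  induction N with
  | zero => intro x y; simp [dP_zero]
  | succ N ih =>
    intro x y
    show (∑ i ∈ Finset.range (N+1+1),
        (((N+1).choose i : ℕ) : ℝ) * (-1)^i * dP x i * dP (y - i) (N+1-i)) = _
    have key : ∀ i ∈ Finset.range (N+1),
        (((N+1).choose (i+1) : ℕ) : ℝ) * (-1)^(i+1) * dP x (i+1) *
          dP (y - ((i+1:ℕ):ℝ)) (N+1-(i+1)) =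
        (-(x * ((N.choose i : ℝ) * (-1)^i * dP (x-1) i * dP ((y-1) - i) (N - i))))
        + ((N.choose (i+1) : ℝ) * (-1)^(i+1) * dP x (i+1) * dP (y - ((i+1:ℕ):ℝ)) (N+1-(i+1))) := by
      intro i hi
      have h1 : N + 1 - (i+1) = N - i := by omega
      rw [Nat.choose_succ_succ, h1, dP_succ_left x i]
      have h2 : y - ((i+1:ℕ):ℝ) = (y - 1) - i := by push_cast; ring
      rw [h2]
      push_cast
      ring
    rw [Finset.sum_range_succ', Finset.sum_congr rfl key, Finset.sum_add_distrib]
    have sA : ∑ i ∈ Finset.range (N+1),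
        (-(x * ((N.choose i : ℝ) * (-1)^i * dP (x-1) i * dP ((y-1) - i) (N - i)))) =
        -(x * dP (y - x) N) := by
      rw [Finset.sum_neg_distrib, ← Finset.mul_sum]
      have := ih (x-1) (y-1)
      rw [show (y-1) - (x-1) = y - x by ring] at this
      rw [this]
    have sB : (∑ i ∈ Finset.range (N+1),
          (N.choose (i+1) : ℝ) * (-1)^(i+1) * dP x (i+1) * dP (y - ((i+1:ℕ):ℝ)) (N+1-(i+1)))
        + (((N+1).choose 0 : ℕ) : ℝ) * (-1)^0 * dP x 0 * dP (y - ((0:ℕ):ℝ)) (N+1-0) =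
        (y - N) * dP (y - x) N := by
      have h0 : (((N+1).choose 0 : ℕ) : ℝ) * (-1)^0 * dP x 0 * dP (y - ((0:ℕ):ℝ)) (N+1-0) =
          (N.choose 0 : ℝ) * (-1)^0 * dP x 0 * dP (y - ((0:ℕ):ℝ)) (N+1-0) := by norm_num
      rw [h0, ← Finset.sum_range_succ'
        (fun i => (N.choose i : ℝ) * (-1)^i * dP x i * dP (y - (i:ℝ)) (N+1-i)) (N+1)]
      rw [Finset.sum_range_succ, Nat.choose_succ_self]
      simp only [Nat.cast_zero, zero_mul, mul_zero, add_zero]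
      rw [← ih x y, Finset.mul_sum]
      refine Finset.sum_congr rfl ?_
      intro i hi
      have hi' : i ≤ N := Nat.lt_succ_iff.mp (Finset.mem_range.mp hi)
      have h2 : N + 1 - i = (N - i) + 1 := by omega
      rw [h2, dP_succ]
      have h3 : ((N - i : ℕ) : ℝ) = (N : ℝ) - i := by
        push_cast [Nat.cast_sub hi']; ring
      rw [h3]
      ring
    rw [add_assoc, sB, sA]
    rw [dP_succ]
    push_cast
    ring

lemma Gdiv (N : ℕ) (x y : ℝ) (hy : ∀ t : ℕ, t < N → y - t ≠ 0) :
    ∑ i ∈ Finset.range (N+1),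
      (N.choose i : ℝ) * (-1)^i * (dP x i / dP y i) = dP (y - x) N / dP y N := by
  rw [← Gpoly N x y, Finset.sum_div]
  refine Finset.sum_congr rfl ?_
  intro i hi
  have hi' : i ≤ N := Nat.lt_succ_iff.mp (Finset.mem_range.mp hi)
  have hsplit : dP y N = dP y i * dP (y - i) (N - i) := by
    rw [← dP_split]
    congr 1
    omega
  have hne : dP y i ≠ 0 := dP_ne_zero fun t ht => hy t (ht.trans_le hi')
  have hne2 : dP (y - i) (N - i) ≠ 0 := by
    refine dP_ne_zero fun t ht => ?_
    have h3 := hy (i + t) (by omega)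
    push_cast at h3 ⊢
    intro hc; apply h3; linarith [hc]
  rw [hsplit]
  field_simp

lemma VDM : ∀ (N K : ℕ) (y : ℝ),
    ∑ m ∈ Finset.range (K+1), (N.choose (K - m) : ℝ) * genBinom y m =
      genBinom ((N : ℝ) + y) K := by
  intro N
  induction N with
  | zero =>
    intro K y
    rw [Finset.sum_eq_single K]
    · simp [Nat.sub_self]
    · intro m hm hmk
      have : K - m ≠ 0 := by
        have := Finset.mem_range.mp hm; omega
      obtain ⟨t, ht⟩ := Nat.exists_eq_succ_of_ne_zero this
      rw [ht, Nat.choose_zero_succ]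
      norm_num
    · intro h; exact absurd (Finset.self_mem_range_succ K) h
  | succ N ih =>
    intro K y
    match K with
    | 0 => simp [gb_zero]
    | K + 1 =>
      rw [Finset.sum_range_succ]
      have key : ∀ m ∈ Finset.range (K+1),
          (((N+1).choose (K + 1 - m) : ℕ) : ℝ) * genBinom y m =
          ((N.choose (K + 1 - m) : ℝ) * genBinom y m)
          + ((N.choose (K - m) : ℝ) * genBinom y m) := by
        intro m hm
        have hm' : m ≤ K := Nat.lt_succ_iff.mp (Finset.mem_range.mp hm)
        have h1 : K + 1 - m = (K - m) + 1 := by omega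
        rw [h1, Nat.choose_succ_succ]
        push_cast
        ring
      rw [Finset.sum_congr rfl key, Finset.sum_add_distrib]
      have h2 : (∑ m ∈ Finset.range (K+1), (N.choose (K + 1 - m) : ℝ) * genBinom y m)
          + (((N+1).choose (K+1-(K+1)) : ℕ) : ℝ) * genBinom y (K+1) =
          genBinom ((N:ℝ) + y) (K+1) := by
        rw [← ih (K+1) y,
          Finset.sum_range_succ (fun m => ((N.choose (K+1-m) : ℕ) : ℝ) * genBinom y m) (K+1)]
        simp
      rw [add_right_comm, h2, ih K y]
      have : (((N+1):ℕ):ℝ) + y = ((N:ℝ) + y) + 1 := by push_cast; ring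
      rw [this, gb_pascal]


variable {β : ℝ}

lemma wcont (hβ : 0 < β) : Continuous (fun r : ℝ => r ^ (2*β+1)) :=
  Real.continuous_rpow_const (by linarith)

lemma intg (hβ : 0 < β) {f : ℝ → ℝ} (hf : Continuous f) :
    IntervalIntegrable (fun r => f r * r^(2*β+1)) volume 0 1 :=
  (hf.mul (wcont hβ)).intervalIntegrable 0 1

lemma EL (hβ : 0 < β) (t : ℕ) :
    ∫ r in (0:ℝ)..1, (r^2)^t * r^(2*β+1) = 1/(2*((t:ℝ)+β+1)) := by
  have he : (-1:ℝ) < 2*t+2*β+1 := by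
    have : (0:ℝ) ≤ t := Nat.cast_nonneg t
    linarith
  have heq : Set.EqOn (fun r : ℝ => (r^2)^t * r^(2*β+1))
      (fun r : ℝ => r ^ (2*(t:ℝ)+2*β+1)) (Set.uIcc 0 1) := by
    intro r hr
    rw [Set.uIcc_of_le (by norm_num : (0:ℝ) ≤ 1)] at hr
    rcases eq_or_lt_of_le hr.1 with h0 | h0
    · simp only [← h0]
      rw [Real.zero_rpow (by positivity), Real.zero_rpow (by positivity)]
      simp
    · show ((r^2)^t) * r^(2*β+1) = _
      rw [← pow_mul, ← Real.rpow_natCast r (2*t), ← Real.rpow_add h0]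
      push_cast
      ring_nf
  rw [intervalIntegral.integral_congr heq, integral_rpow (Or.inl he)]
  rw [Real.one_rpow, Real.zero_rpow (by positivity)]
  push_cast
  rw [show 2*(t:ℝ)+2*β+1+1 = 2*((t:ℝ)+β+1) by ring]
  ring

noncomputable def Bval (β : ℝ) (m t : ℕ) : ℝ :=
  (1/2) * (-1)^m * (Nat.factorial m : ℝ) / dP ((t:ℝ)+β+1+m) (m+1)

lemma BETA (hβ : 0 < β) (m t : ℕ) :
    ∫ r in (0:ℝ)..1, ((r^2-1)^m * (r^2)^t) * r^(2*β+1) = Bval β m t := by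
  have expand : ∀ r : ℝ, ((r^2-1)^m * (r^2)^t) * r^(2*β+1) =
      ∑ i ∈ Finset.range (m+1),
        ((m.choose i : ℝ) * (-1)^(m-i) * (r^2)^(i+t)) * r^(2*β+1) := by
    intro r
    rw [sub_pow, Finset.sum_mul, Finset.sum_mul]
    refine Finset.sum_congr rfl ?_
    intro i hi
    have hi' : i ≤ m := Nat.lt_succ_iff.mp (Finset.mem_range.mp hi)
    have hsgn : (-1:ℝ)^(i+m) = (-1)^(m-i) := by
      rw [show i + m = (m-i) + 2*i by omega, pow_add, pow_mul]
      norm_num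
    rw [hsgn, pow_add]
    ring
  rw [intervalIntegral.integral_congr (fun r _ => expand r)]
  rw [intervalIntegral.integral_finset_sum]
  · have : ∀ i ∈ Finset.range (m+1),
        ∫ r in (0:ℝ)..1, ((m.choose i : ℝ) * (-1)^(m-i) * (r^2)^(i+t)) * r^(2*β+1)
        = ((m.choose i : ℝ) * (-1)^(m-i)) * (1/(2*((i:ℝ)+(t:ℝ)+β+1))) := by
      intro i hi
      simp only [mul_assoc]
      rw [intervalIntegral.integral_const_mul, intervalIntegral.integral_const_mul]
      rw [show (∫ r in (0:ℝ)..1, (r^2)^(i+t) * r^(2*β+1)) = 1/(2*(((i+t:ℕ):ℝ)+β+1)) from EL hβ (i+t)]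
      push_cast
      ring
    rw [Finset.sum_congr rfl this]
    have hz : (0:ℝ) < (t:ℝ)+β+1 := by positivity
    have := PF m ((t:ℝ)+β+1) hz
    calc ∑ i ∈ Finset.range (m+1),
          ((m.choose i : ℝ) * (-1)^(m-i)) * (1/(2*((i:ℝ)+(t:ℝ)+β+1)))
        = (1/2) * ∑ i ∈ Finset.range (m+1),
            (m.choose i : ℝ) * (-1)^(m-i) * (1/(((t:ℝ)+β+1)+i)) := by
          rw [Finset.mul_sum]
          refine Finset.sum_congr rfl fun i _ => ?_
          have key : (1:ℝ)/2 * (1/(((t:ℝ)+β+1)+↑i)) = 1/(2*((i:ℝ)+↑t+β+1)) := by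
            rw [one_div_mul_one_div,
              show 2*(((t:ℝ)+β+1)+↑i) = 2*((i:ℝ)+↑t+β+1) by ring]
          rw [← key]
          ring
      _ = Bval β m t := by
          rw [this, Bval]
          rw [show (t:ℝ)+β+1+(m:ℝ) = ((t:ℝ)+β+1)+(m:ℝ) by ring]
          ring
  · intro i hi
    exact intg hβ (continuous_const.mul ((continuous_pow 2).pow (i+t)))

noncomputable def gPgen (c : ℕ → ℝ) (n : ℕ) : Polynomial ℝ :=
  ∑ m ∈ Finset.range (n+1), Polynomial.C (c m) *
    (Polynomial.C ((m:ℕ):ℝ) * (Polynomial.X - 1)^(m-1) * Polynomial.X^(n-m)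
     + Polynomial.C (((n-m:ℕ):ℝ)) * (Polynomial.X - 1)^m * Polynomial.X^(n-m-1))

lemma hX1 : ((Polynomial.X : Polynomial ℝ) - 1) = Polynomial.X - Polynomial.C 1 := by
  rw [Polynomial.C_1]

lemma monic_aux (a b : ℕ) : (((Polynomial.X : Polynomial ℝ) - 1)^a * Polynomial.X^b).Monic := by
  rw [hX1]
  exact ((monic_X_sub_C (1:ℝ)).pow a).mul (monic_X_pow b)

lemma natDegree_aux (a b : ℕ) :
    (((Polynomial.X : Polynomial ℝ) - 1)^a * Polynomial.X^b).natDegree = a + b := by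
  rw [Polynomial.Monic.natDegree_mul (by rw [hX1]; exact (monic_X_sub_C (1:ℝ)).pow a)
    (monic_X_pow b), Polynomial.natDegree_pow, Polynomial.natDegree_X_pow, hX1,
    Polynomial.natDegree_X_sub_C, mul_one]

lemma coeff_aux_top (a b : ℕ) :
    (((Polynomial.X : Polynomial ℝ) - 1)^a * Polynomial.X^b).coeff (a+b) = 1 := by
  have := (monic_aux a b).coeff_natDegree
  rwa [natDegree_aux] at this

lemma gPgen_natDegree_lt (c : ℕ → ℝ) {n : ℕ} (hn : 1 ≤ n) : (gPgen c n).natDegree < n := by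
  have h : (gPgen c n).natDegree ≤ n - 1 := by
    apply Polynomial.natDegree_sum_le_of_forall_le
    intro m hm
    have hm' : m ≤ n := Nat.lt_succ_iff.mp (Finset.mem_range.mp hm)
    refine le_trans (Polynomial.natDegree_mul_le) ?_
    rw [Polynomial.natDegree_C, zero_add]
    refine le_trans (Polynomial.natDegree_add_le _ _) ?_
    apply max_le
    · rcases Nat.eq_zero_or_pos m with hm0 | hm0
      · subst hm0; simp
      · refine le_trans (Polynomial.natDegree_mul_le) ?_
        have h1 : (Polynomial.C ((m:ℕ):ℝ) * (Polynomial.X - 1)^(m-1)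
            : Polynomial ℝ).natDegree ≤ m - 1 := by
          refine le_trans (Polynomial.natDegree_mul_le) ?_
          rw [Polynomial.natDegree_C, zero_add]
          refine le_trans (Polynomial.natDegree_pow_le) ?_
          rw [hX1, Polynomial.natDegree_X_sub_C, mul_one]
        have h2 : ((Polynomial.X : Polynomial ℝ)^(n-m)).natDegree ≤ n - m :=
          le_of_eq (Polynomial.natDegree_X_pow _)
        omega
    · rcases eq_or_lt_of_le hm' with hmn | hmn
      · subst hmn; simp
      · refine le_trans (Polynomial.natDegree_mul_le) ?_
        have h1 : (Polynomial.C (((n-m:ℕ):ℝ)) * (Polynomial.X - 1)^m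
            : Polynomial ℝ).natDegree ≤ m := by
          refine le_trans (Polynomial.natDegree_mul_le) ?_
          rw [Polynomial.natDegree_C, zero_add]
          refine le_trans (Polynomial.natDegree_pow_le) ?_
          rw [hX1, Polynomial.natDegree_X_sub_C, mul_one]
        have h2 : ((Polynomial.X : Polynomial ℝ)^(n-m-1)).natDegree ≤ n - m - 1 :=
          le_of_eq (Polynomial.natDegree_X_pow _)
        omega
  omega

lemma gPgen_coeff_top (c : ℕ → ℝ) {n : ℕ} (hn : 1 ≤ n) :
    (gPgen c n).coeff (n-1) = (n:ℝ) * ∑ m ∈ Finset.range (n+1), c m := by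
  rw [gPgen, Polynomial.finset_sum_coeff, Finset.mul_sum]
  refine Finset.sum_congr rfl fun m hm => ?_
  have hm' : m ≤ n := Nat.lt_succ_iff.mp (Finset.mem_range.mp hm)
  simp only [mul_assoc, Polynomial.coeff_add, Polynomial.coeff_C_mul]
  rcases Nat.eq_zero_or_pos m with hm0 | hm0
  · subst hm0
    have hc : (((Polynomial.X : Polynomial ℝ) - 1)^(0:ℕ) * Polynomial.X^(n-1)).coeff (n-1)
        = 1 := by
      simpa using coeff_aux_top 0 (n-1)
    rw [show n - 0 - 1 = n - 1 from by omega, hc]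
    simp [mul_comm]
  · have hc1 : (((Polynomial.X : Polynomial ℝ) - 1)^(m-1) * Polynomial.X^(n-m)).coeff (n-1)
        = 1 := by
      rw [show n - 1 = (m-1) + (n-m) by omega, coeff_aux_top]
    rcases eq_or_lt_of_le hm' with hmn | hmn
    · subst hmn
      rw [hc1]
      rw [Nat.sub_self]
      push_cast
      ring
    · have hc2 : (((Polynomial.X : Polynomial ℝ) - 1)^m * Polynomial.X^(n-m-1)).coeff (n-1)
          = 1 := by
        rw [show n - 1 = m + (n-m-1) by omega, coeff_aux_top]
      rw [hc1, hc2]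
      have : ((n-m:ℕ):ℝ) = (n:ℝ) - m := by push_cast [Nat.cast_sub hm']; ring
      rw [this]
      push_cast
      ring

noncomputable def cJ (β : ℝ) (n m : ℕ) : ℝ :=
  genBinom ((n:ℝ) + (-1)) (n - m) * genBinom ((n:ℝ) + β) m

noncomputable def gP (β : ℝ) (n : ℕ) : Polynomial ℝ := gPgen (fun m => cJ β n m) n

variable {β : ℝ}

lemma jacobi_eq (β : ℝ) (n : ℕ) (s : ℝ) :
    genJacobi (-1) β n (2*s^2 - 1) =
      ∑ m ∈ Finset.range (n+1), cJ β n m * ((s^2-1)^m * (s^2)^(n-m)) := by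
  unfold genJacobi cJ
  refine Finset.sum_congr rfl fun m _ => ?_
  rw [show (2*s^2 - 1 - 1)/2 = s^2 - 1 by ring, show (2*s^2 - 1 + 1)/2 = s^2 by ring]
  ring

lemma hasDeriv_jacobi (β : ℝ) (n : ℕ) (r : ℝ) :
    HasDerivAt (fun s => genJacobi (-1) β n (2*s^2 - 1))
      (2*r*(gP β n).eval (r^2)) r := by
  have hfun : (fun s => genJacobi (-1) β n (2*s^2 - 1)) =
      fun s => ∑ m ∈ Finset.range (n+1), cJ β n m * ((s^2-1)^m * (s^2)^(n-m)) := by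
    funext s; exact jacobi_eq β n s
  rw [hfun]
  have h2 : HasDerivAt (fun s : ℝ => s^2) (2*r) r := by
    simpa using hasDerivAt_pow 2 r
  have hterm : ∀ m ∈ Finset.range (n+1),
      HasDerivAt (fun s => cJ β n m * ((s^2-1)^m * (s^2)^(n-m)))
        (cJ β n m * ((((m:ℕ):ℝ) * (r^2-1)^(m-1) * (2*r)) * (r^2)^(n-m)
          + (r^2-1)^m * ((((n-m:ℕ):ℝ) * (r^2)^(n-m-1)) * (2*r)))) r := by
    intro m _
    have hA : HasDerivAt (fun s : ℝ => (s^2-1)^m)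
        (((m:ℕ):ℝ) * (r^2-1)^(m-1) * (2*r)) r := by
      simpa using (h2.sub_const 1).fun_pow m
    have hB : HasDerivAt (fun s : ℝ => (s^2)^(n-m))
        ((((n-m:ℕ):ℝ) * (r^2)^(n-m-1)) * (2*r)) r := by
      simpa [mul_assoc] using h2.fun_pow (n-m)
    simpa [mul_assoc] using (hA.mul hB).const_mul (cJ β n m)
  have hsum : HasDerivAt (fun s => ∑ m ∈ Finset.range (n+1),
      cJ β n m * ((s^2-1)^m * (s^2)^(n-m))) _ r := HasDerivAt.fun_sum hterm
  convert hsum using 1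
  rw [gP, gPgen, Polynomial.eval_finset_sum, Finset.mul_sum]
  refine Finset.sum_congr rfl fun m _ => ?_
  simp only [Polynomial.eval_mul, Polynomial.eval_add, Polynomial.eval_pow,
    Polynomial.eval_sub, Polynomial.eval_X, Polynomial.eval_one, Polynomial.eval_C]
  ring

lemma ibeta (hβ : 0 < β) (c : ℝ) (M T : ℕ) :
    ∫ r in (0:ℝ)..1, (c * ((r^2-1)^M * (r^2)^T)) * r^(2*β+1) = c * Bval β M T := by
  rw [← BETA hβ M T, ← intervalIntegral.integral_const_mul]
  refine intervalIntegral.integral_congr fun r _ => ?_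
  ring

lemma cJ_zero {k : ℕ} (hk : 1 ≤ k) : cJ β k 0 = 0 := by
  have h1 : ((k:ℝ) + (-1)) = (((k-1:ℕ)):ℝ) := by
    push_cast [Nat.cast_sub hk]; ring
  rw [cJ, Nat.sub_zero, h1, gb_nat, Nat.choose_eq_zero_of_lt (by omega)]
  norm_num

lemma Nsum (hβ : 0 < β) {k : ℕ} (hk : 1 ≤ k) (a : ℕ) :
    ∫ r in (0:ℝ)..1, (4*(r^2) * (gP β k).eval (r^2) * (r^2)^a) * r^(2*β+1)
    = ∑ m ∈ Finset.range (k+1),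
        ((cJ β k m * m * 4) * Bval β (m-1) ((k-m)+a+1)
          + (cJ β k m * (k-m : ℕ) * 4) * Bval β m ((k-m-1)+a+1)) := by
  have hpt : ∀ r : ℝ, (4*(r^2) * (gP β k).eval (r^2) * (r^2)^a) * r^(2*β+1)
      = ∑ m ∈ Finset.range (k+1),
          (((cJ β k m * m * 4) * ((r^2-1)^(m-1) * (r^2)^((k-m)+a+1))) * r^(2*β+1)
           + ((cJ β k m * (k-m : ℕ) * 4) * ((r^2-1)^m * (r^2)^((k-m-1)+a+1))) * r^(2*β+1)) := by
    intro r
    rw [gP, gPgen, Polynomial.eval_finset_sum]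
    rw [Finset.mul_sum, Finset.sum_mul, Finset.sum_mul]
    refine Finset.sum_congr rfl fun m _ => ?_
    simp only [Polynomial.eval_mul, Polynomial.eval_add, Polynomial.eval_pow,
      Polynomial.eval_sub, Polynomial.eval_X, Polynomial.eval_one, Polynomial.eval_C]
    rw [pow_succ (r^2) ((k-m)+a), pow_add (r^2) (k-m) a,
      pow_succ (r^2) ((k-m-1)+a), pow_add (r^2) (k-m-1) a]
    ring
  have hcont : ∀ (c : ℝ) (M T : ℕ), Continuous (fun r : ℝ => c * ((r^2-1)^M * (r^2)^T)) :=
    fun c M T => continuous_const.mul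
      ((((continuous_pow 2).sub continuous_const).pow M).mul ((continuous_pow 2).pow T))
  rw [intervalIntegral.integral_congr (fun r _ => hpt r)]
  rw [intervalIntegral.integral_finset_sum (fun m _ =>
    ((intg hβ (hcont _ _ _)).add (intg hβ (hcont _ _ _))))]
  refine Finset.sum_congr rfl fun m _ => ?_
  rw [intervalIntegral.integral_add (intg hβ (hcont _ _ _)) (intg hβ (hcont _ _ _)),
    ibeta hβ, ibeta hβ]

lemma Nterm (hβ : 0 < β) {k : ℕ} (a i : ℕ) (hik : i < k) :
    (cJ β k (i+1) * ((i+1:ℕ):ℝ) * 4) * Bval β ((i+1)-1) ((k-(i+1))+a+1)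
      + (cJ β k (i+1) * ((k-(i+1) : ℕ):ℝ) * 4) * Bval β (i+1) ((k-(i+1)-1)+a+1)
    = 2*((a:ℝ)+β+1)*((k:ℝ)+β) * ((((k-1).choose i : ℕ) : ℝ) * (-1)^i *
        (dP ((k:ℝ)+β-1) i / dP ((k:ℝ)+(a:ℝ)+β-1) i))
      / (((k:ℝ)+(a:ℝ)+β+1)*((k:ℝ)+(a:ℝ)+β)) := by
  have hik' : (i:ℝ) < (k:ℝ) := by exact_mod_cast hik
  have ha : (0:ℝ) ≤ a := Nat.cast_nonneg a
  have hk1 : 1 ≤ k := by omega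
  have hkr : (1:ℝ) ≤ (k:ℝ) := by exact_mod_cast hk1
  have hQ : 0 < dP ((k:ℝ)+(a:ℝ)+β+1-2) i := by
    apply dP_pos; intro t ht
    have ht' : (t:ℝ)+1 ≤ (i:ℝ) := by exact_mod_cast Nat.succ_le_of_lt ht
    linarith
  have hP : 0 < dP ((k:ℝ)+(a:ℝ)+β+1) (i+1) := by
    apply dP_pos; intro t ht
    have ht' : (t:ℝ) ≤ (i:ℝ) := by exact_mod_cast Nat.lt_succ_iff.mp ht
    linarith
  have hD : 0 < dP ((k:ℝ)+(a:ℝ)+β-1) i := by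
    apply dP_pos; intro t ht
    have ht' : (t:ℝ)+1 ≤ (i:ℝ) := by exact_mod_cast Nat.succ_le_of_lt ht
    linarith
  have hYi : (0:ℝ) < (k:ℝ)+(a:ℝ)+β+1 - ((i+1:ℕ):ℝ) := by push_cast; linarith
  have e1 : dP ((k:ℝ)+(a:ℝ)+β+1) ((i+1)+1)
      = ((k:ℝ)+(a:ℝ)+β+1)*((k:ℝ)+(a:ℝ)+β)*dP ((k:ℝ)+(a:ℝ)+β+1-2) i := by
    rw [show (i+1)+1 = 2+i by omega, dP_split]
    rw [show (2:ℕ) = 1+1 from rfl, dP_succ, dP_one]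
    push_cast
    ring_nf
  have hPQ : dP ((k:ℝ)+(a:ℝ)+β+1) (i+1) * ((k:ℝ)+(a:ℝ)+β+1 - ((i+1:ℕ):ℝ))
      = ((k:ℝ)+(a:ℝ)+β+1)*((k:ℝ)+(a:ℝ)+β)*dP ((k:ℝ)+(a:ℝ)+β+1-2) i := by
    rw [← e1]
    exact (dP_succ _ (i+1)).symm
  have hfact : (((i+1).factorial : ℕ):ℝ) = ((i+1:ℕ):ℝ) * (i.factorial:ℝ) := by
    push_cast [Nat.factorial_succ]; ring
  have hc : cJ β k (i+1) * (((i+1).factorial : ℕ):ℝ)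
      = (((k-1).choose i : ℕ):ℝ) * (((k:ℝ)+β) * dP ((k:ℝ)+β-1) i) := by
    rw [cJ]
    have e : (k:ℝ)+(-1) = ((k-1:ℕ):ℝ) := by push_cast [Nat.cast_sub hk1]; ring
    rw [e, gb_nat, show k-(i+1) = (k-1)-i by omega,
      Nat.choose_symm (by omega : i ≤ k-1)]
    rw [mul_assoc, gb_mul_factorial, dP_succ_left]
  have hcJ : cJ β k (i+1)
      = (((k-1).choose i : ℕ):ℝ) * (((k:ℝ)+β) * dP ((k:ℝ)+β-1) i)
        / (((i+1).factorial : ℕ):ℝ) := by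
    rw [eq_div_iff (by positivity : (((i+1).factorial : ℕ):ℝ) ≠ 0)]
    exact hc
  have hB1 : Bval β ((i+1)-1) ((k-(i+1))+a+1)
      = (1/2)*(-1)^i * (i.factorial:ℝ) * ((k:ℝ)+(a:ℝ)+β+1 - ((i+1:ℕ):ℝ))
        / (((k:ℝ)+(a:ℝ)+β+1)*((k:ℝ)+(a:ℝ)+β)*dP ((k:ℝ)+(a:ℝ)+β+1-2) i) := by
    rw [show (i+1)-1 = i by omega, Bval]
    have harg : (((k-(i+1))+a+1 : ℕ):ℝ)+β+1+(i:ℝ) = (k:ℝ)+(a:ℝ)+β+1 := by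
      push_cast [Nat.cast_sub (show i+1 ≤ k by omega)]
      ring
    rw [harg, ← hPQ, mul_div_mul_right _ _ (ne_of_gt hYi)]
  have hQD : dP ((k:ℝ)+(a:ℝ)+β+1-2) i = dP ((k:ℝ)+(a:ℝ)+β-1) i := by
    congr 1
    ring
  rw [hQD] at hB1 e1
  have hY0 : ((k:ℝ)+(a:ℝ)+β+1) ≠ 0 := by positivity
  have hY10 : ((k:ℝ)+(a:ℝ)+β) ≠ 0 := by positivity
  have hD0 : dP ((k:ℝ)+(a:ℝ)+β-1) i ≠ 0 := ne_of_gt hD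
  have hfac0 : (i.factorial:ℝ) ≠ 0 := by positivity
  have hi10 : ((i:ℝ)+1) ≠ 0 := by positivity
  rcases eq_or_lt_of_le (Nat.succ_le_of_lt hik) with hik1 | hik1
  · -- i+1 = k
    have hz : ((k-(i+1):ℕ):ℝ) = 0 := by rw [← hik1]; simp
    have hik2 : i + 1 = k := hik1
    have hik1' : (i:ℝ)+1 = (k:ℝ) := by exact_mod_cast hik2
    rw [hB1, hz, hcJ, hfact]
    simp only [mul_zero, zero_mul, add_zero]
    push_cast
    rw [hik1']
    field_simp
    ring
  · -- i+1 < k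
    have hB2 : Bval β (i+1) ((k-(i+1)-1)+a+1)
        = (1/2)*(-1)^(i+1) * (((i+1).factorial : ℕ):ℝ)
          / (((k:ℝ)+(a:ℝ)+β+1)*((k:ℝ)+(a:ℝ)+β)*dP ((k:ℝ)+(a:ℝ)+β-1) i) := by
      rw [Bval]
      have harg : (((k-(i+1)-1)+a+1 : ℕ):ℝ)+β+1+((i+1:ℕ):ℝ) = (k:ℝ)+(a:ℝ)+β+1 := by
        have hn : (k-(i+1)-1)+a+1 = k+a-(i+1) := by omega
        rw [hn]
        push_cast [Nat.cast_sub (show i+1 ≤ k+a by omega)]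
        ring
      rw [harg, e1]
    rw [hB1, hB2, hcJ, hfact]
    have hz : ((k-(i+1):ℕ):ℝ) = (k:ℝ) - (i:ℝ) - 1 := by
      push_cast [Nat.cast_sub (show i+1 ≤ k by omega)]
      ring
    rw [hz]
    push_cast
    field_simp
    ring

lemma Nval (hβ : 0 < β) {k : ℕ} (hk : 1 ≤ k) (a : ℕ) :
    ∫ r in (0:ℝ)..1, (4*(r^2) * (gP β k).eval (r^2) * (r^2)^a) * r^(2*β+1)
    = 2*((a:ℝ)+β+1)*((k:ℝ)+β) * dP ((a:ℕ):ℝ) (k-1)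
      / ((((k:ℝ)+(a:ℝ)+β+1) * ((k:ℝ)+(a:ℝ)+β)) * dP ((k:ℝ)+(a:ℝ)+β-1) (k-1)) := by
  have hkr : (1:ℝ) ≤ (k:ℝ) := by exact_mod_cast hk
  have ha : (0:ℝ) ≤ a := Nat.cast_nonneg a
  rw [Nsum hβ hk a, Finset.sum_range_succ']
  have h0 : (cJ β k 0 * ((0:ℕ):ℝ) * 4) * Bval β (0-1) ((k-0)+a+1)
      + (cJ β k 0 * ((k-0 : ℕ):ℝ) * 4) * Bval β 0 ((k-0-1)+a+1) = 0 := by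
    rw [cJ_zero hk]
    ring
  rw [h0, add_zero]
  rw [Finset.sum_congr rfl (fun i hi => Nterm hβ a i (Finset.mem_range.mp hi))]
  have hterm : ∀ i ∈ Finset.range k,
      2*((a:ℝ)+β+1)*((k:ℝ)+β) * ((((k-1).choose i : ℕ) : ℝ) * (-1)^i *
        (dP ((k:ℝ)+β-1) i / dP ((k:ℝ)+(a:ℝ)+β-1) i))
      / (((k:ℝ)+(a:ℝ)+β+1)*((k:ℝ)+(a:ℝ)+β))
      = (2*((a:ℝ)+β+1)*((k:ℝ)+β) / (((k:ℝ)+(a:ℝ)+β+1)*((k:ℝ)+(a:ℝ)+β)))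
        * ((((k-1).choose i : ℕ) : ℝ) * (-1)^i *
          (dP ((k:ℝ)+β-1) i / dP ((k:ℝ)+(a:ℝ)+β-1) i)) := by
    intro i _
    ring
  rw [Finset.sum_congr rfl hterm, ← Finset.mul_sum]
  have hy : ∀ t : ℕ, t < k-1 → ((k:ℝ)+(a:ℝ)+β-1) - t ≠ 0 := by
    intro t ht
    have ht2 : t + 2 ≤ k := by omega
    have ht' : (t:ℝ)+2 ≤ (k:ℝ) := by exact_mod_cast ht2
    have : (0:ℝ) < ((k:ℝ)+(a:ℝ)+β-1) - t := by linarith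
    linarith
  have hsum := Gdiv (k-1) ((k:ℝ)+β-1) ((k:ℝ)+(a:ℝ)+β-1) hy
  rw [show (k-1)+1 = k by omega] at hsum
  rw [hsum, show ((k:ℝ)+(a:ℝ)+β-1) - ((k:ℝ)+β-1) = (a:ℝ) by ring]
  have hDy : 0 < dP ((k:ℝ)+(a:ℝ)+β-1) (k-1) := by
    apply dP_pos; intro t ht
    have ht2 : t + 2 ≤ k := by omega
    have ht' : (t:ℝ)+2 ≤ (k:ℝ) := by exact_mod_cast ht2
    linarith
  have h1 : ((k:ℝ)+(a:ℝ)+β+1) ≠ 0 := by positivity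
  have h2 : ((k:ℝ)+(a:ℝ)+β) ≠ 0 := by positivity
  have h3 : dP ((k:ℝ)+(a:ℝ)+β-1) (k-1) ≠ 0 := ne_of_gt hDy
  field_simp

lemma gP_zero_n : gP β 0 = 0 := by
  simp [gP, gPgen]

lemma deriv_jac (n : ℕ) (r : ℝ) :
    deriv (fun s => genJacobi (-1) β n (2*s^2 - 1)) r = 2*r*(gP β n).eval (r^2) :=
  (hasDeriv_jacobi β n r).deriv

lemma int_swap (hβ : 0 < β) (k j : ℕ) :
    (∫ r in (0:ℝ)..1, deriv (fun s => genJacobi (-1) β k (2*s^2 - 1)) r *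
        deriv (fun s => genJacobi (-1) β j (2*s^2 - 1)) r * r^(2*β+1))
    = ∫ r in (0:ℝ)..1, deriv (fun s => genJacobi (-1) β j (2*s^2 - 1)) r *
        deriv (fun s => genJacobi (-1) β k (2*s^2 - 1)) r * r^(2*β+1) :=
  intervalIntegral.integral_congr fun r _ => by ring

lemma Ival (hβ : 0 < β) {k j : ℕ} (hk : 1 ≤ k) (hj : 1 ≤ j) :
    (∫ r in (0:ℝ)..1, deriv (fun s => genJacobi (-1) β k (2*s^2 - 1)) r *
        deriv (fun s => genJacobi (-1) β j (2*s^2 - 1)) r * r^(2*β+1))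
    = ∑ a ∈ Finset.range j, (gP β j).coeff a *
        (2*((a:ℝ)+β+1)*((k:ℝ)+β) * dP ((a:ℕ):ℝ) (k-1)
          / ((((k:ℝ)+(a:ℝ)+β+1) * ((k:ℝ)+(a:ℝ)+β)) * dP ((k:ℝ)+(a:ℝ)+β-1) (k-1))) := by
  have hdeg : (gP β j).natDegree < j := gPgen_natDegree_lt _ hj
  have hpt : ∀ r : ℝ, deriv (fun s => genJacobi (-1) β k (2*s^2 - 1)) r *
      deriv (fun s => genJacobi (-1) β j (2*s^2 - 1)) r * r^(2*β+1)
      = ∑ a ∈ Finset.range j, (gP β j).coeff a *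
          ((4*(r^2) * (gP β k).eval (r^2) * (r^2)^a) * r^(2*β+1)) := by
    intro r
    rw [deriv_jac, deriv_jac, Polynomial.eval_eq_sum_range' hdeg (r^2)]
    simp only [Finset.mul_sum, Finset.sum_mul]
    exact Finset.sum_congr rfl fun a _ => by ring
  have hint : ∀ a ∈ Finset.range j, IntervalIntegrable
      (fun r : ℝ => (gP β j).coeff a *
        ((4*(r^2) * (gP β k).eval (r^2) * (r^2)^a) * r^(2*β+1))) volume 0 1 := by
    intro a _
    exact (intg hβ (((continuous_const.mul (continuous_pow 2)).mul
        ((gP β k).continuous.comp (continuous_pow 2))).mul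
          ((continuous_pow 2).pow a))).const_mul _
  rw [intervalIntegral.integral_congr (fun r _ => hpt r),
    intervalIntegral.integral_finset_sum hint]
  exact Finset.sum_congr rfl fun a _ => by
    rw [intervalIntegral.integral_const_mul, Nval hβ hk a]

lemma sum_cJ {k : ℕ} (hk : 1 ≤ k) :
    ∑ m ∈ Finset.range (k+1), cJ β k m = genBinom (2*(k:ℝ)+β-1) k := by
  have e : (k:ℝ)+(-1) = ((k-1:ℕ):ℝ) := by push_cast [Nat.cast_sub hk]; ring
  have h1 : ∀ m ∈ Finset.range (k+1), cJ β k m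
      = (((k-1).choose (k-m) : ℕ):ℝ) * genBinom ((k:ℝ)+β) m := by
    intro m _
    rw [cJ, e, gb_nat]
  rw [Finset.sum_congr rfl h1, VDM (k-1) k ((k:ℝ)+β)]
  congr 1
  push_cast [Nat.cast_sub hk]
  ring

lemma Idiag (hβ : 0 < β) {k : ℕ} (hk : 1 ≤ k) :
    (∫ r in (0:ℝ)..1, deriv (fun s => genJacobi (-1) β k (2*s^2 - 1)) r *
        deriv (fun s => genJacobi (-1) β k (2*s^2 - 1)) r * r^(2*β+1))
    = 2*((k:ℝ)+β)^2/(2*(k:ℝ)+β) := by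
  have hkr : (1:ℝ) ≤ (k:ℝ) := by exact_mod_cast hk
  rw [Ival hβ hk hk]
  rw [Finset.sum_eq_single_of_mem (k-1) (Finset.mem_range.mpr (by omega))]
  · have hc1 : ((k-1:ℕ):ℝ) = (k:ℝ)-1 := by push_cast [Nat.cast_sub hk]; ring
    have hcoeff : (gP β k).coeff (k-1) = (k:ℝ) * genBinom (2*(k:ℝ)+β-1) k := by
      rw [gP, gPgen_coeff_top _ hk, sum_cJ hk]
    have hdf : dP ((k-1:ℕ):ℝ) (k-1) = (((k-1).factorial : ℕ):ℝ) := by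
      rw [dP_nat, Nat.descFactorial_self]
    have hD2 : 0 < dP (2*(k:ℝ)+β-2) (k-1) := by
      apply dP_pos; intro t ht
      have ht2 : t + 2 ≤ k + 1 := by omega
      have ht' : (t:ℝ) + 2 ≤ (k:ℝ) + 1 := by exact_mod_cast ht2
      linarith
    have hsl := dP_succ_left (2*(k:ℝ)+β-1) (k-1)
    rw [show (k-1)+1 = k by omega,
      show (2*(k:ℝ)+β-1)-1 = 2*(k:ℝ)+β-2 by ring] at hsl
    have hkfact : ((k.factorial : ℕ):ℝ) = (k:ℝ) * (((k-1).factorial : ℕ):ℝ) := by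
      rw [show k = (k-1)+1 by omega, Nat.factorial_succ]
      push_cast [Nat.cast_sub hk]
      ring
    have hgB : genBinom (2*(k:ℝ)+β-1) k * ((k.factorial : ℕ):ℝ)
        = (2*(k:ℝ)+β-1) * dP (2*(k:ℝ)+β-2) (k-1) := by
      rw [gb_mul_factorial, ← hsl]
    have hgB' : genBinom (2*(k:ℝ)+β-1) k
        = (2*(k:ℝ)+β-1) * dP (2*(k:ℝ)+β-2) (k-1) / ((k.factorial : ℕ):ℝ) := by
      rw [eq_div_iff (by positivity : ((k.factorial : ℕ):ℝ) ≠ 0)]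
      exact hgB
    rw [hcoeff, hdf, hgB', hc1, hkfact]
    rw [show (k:ℝ)+((k:ℝ)-1)+β+1 = 2*(k:ℝ)+β by ring,
      show (k:ℝ)+((k:ℝ)-1)+β-1 = 2*(k:ℝ)+β-2 by ring,
      show (k:ℝ)+((k:ℝ)-1)+β = 2*(k:ℝ)+β-1 by ring,
      show (k:ℝ)-1+β+1 = (k:ℝ)+β by ring]
    have hne1 : (2*(k:ℝ)+β-1) ≠ 0 := by
      have : (0:ℝ) < 2*(k:ℝ)+β-1 := by linarith
      linarith
    have hne2 : (2*(k:ℝ)+β) ≠ 0 := by positivity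
    have hne3 : dP (2*(k:ℝ)+β-2) (k-1) ≠ 0 := ne_of_gt hD2
    have hne4 : (((k-1).factorial : ℕ):ℝ) ≠ 0 := by positivity
    have hne5 : (k:ℝ) ≠ 0 := by positivity
    have hne6 : ((k:ℝ)+β) ≠ 0 := by positivity
    have hne7 : (2*(k:ℝ)+β-1) * dP (2*(k:ℝ)+β-2) (k-1) ≠ 0 := mul_ne_zero hne1 hne3
    field_simp
    exact div_self (by rw [show (k:ℝ)*2 = 2*(k:ℝ) by ring]; exact hne7)
  · intro a ha hne
    have ha' : a < k - 1 := by
      have := Finset.mem_range.mp ha; omega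
    rw [dP_nat_zero ha']
    simp

end Aux

/-- Stiffness-matrix orthogonality of the radial basis `J_k^{-1,β}(2r²-1)`. -/
theorem radial_stiffness_II (β : ℝ) (hβ : 0 < β) (k j : ℕ) :
    ((2 * (k : ℝ) + β) * (2 * (j : ℝ) + β) / (((k : ℝ) + β) * ((j : ℝ) + β))) *
      ∫ r in (0:ℝ)..1,
        deriv (fun s => genJacobi (-1) β k (2 * s ^ 2 - 1)) r *
          deriv (fun s => genJacobi (-1) β j (2 * s ^ 2 - 1)) r * r ^ (2 * β + 1)
    = (if k = j then 1 else 0) * (2 * (2 * (k : ℝ) + β)) *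
        (1 - if k = 0 then 1 else 0) := by
  by_cases hk0 : k = 0
  · subst hk0
    have hzero : ∀ r ∈ Set.uIcc (0:ℝ) 1,
        deriv (fun s => genJacobi (-1) β 0 (2 * s ^ 2 - 1)) r *
          deriv (fun s => genJacobi (-1) β j (2 * s ^ 2 - 1)) r * r ^ (2 * β + 1) = 0 := by
      intro r _
      rw [deriv_jac, gP_zero_n]
      simp
    rw [intervalIntegral.integral_congr hzero, intervalIntegral.integral_zero, mul_zero]
    simp
  by_cases hj0 : j = 0
  · subst hj0
    have hzero : ∀ r ∈ Set.uIcc (0:ℝ) 1,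
        deriv (fun s => genJacobi (-1) β k (2 * s ^ 2 - 1)) r *
          deriv (fun s => genJacobi (-1) β 0 (2 * s ^ 2 - 1)) r * r ^ (2 * β + 1) = 0 := by
      intro r _
      rw [deriv_jac, deriv_jac, gP_zero_n]
      simp
    rw [intervalIntegral.integral_congr hzero, intervalIntegral.integral_zero, mul_zero]
    simp [hk0]
  have hk : 1 ≤ k := Nat.one_le_iff_ne_zero.mpr hk0
  have hj : 1 ≤ j := Nat.one_le_iff_ne_zero.mpr hj0
  rcases lt_trichotomy k j with hlt | heq | hgt
  · have h0 : ∑ a ∈ Finset.range k, (gP β k).coeff a *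
        (2*((a:ℝ)+β+1)*((j:ℝ)+β) * dP ((a:ℕ):ℝ) (j-1)
          / ((((j:ℝ)+(a:ℝ)+β+1) * ((j:ℝ)+(a:ℝ)+β)) * dP ((j:ℝ)+(a:ℝ)+β-1) (j-1))) = 0 := by
      refine Finset.sum_eq_zero fun a ha => ?_
      rw [dP_nat_zero (show a < j - 1 by have := Finset.mem_range.mp ha; omega)]
      simp
    rw [int_swap hβ, Ival hβ hj hk, h0, mul_zero]
    simp [Nat.ne_of_lt hlt]
  · subst heq
    rw [Idiag hβ hk, if_pos rfl, if_neg hk0]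
    have h1 : ((k:ℝ)+β) ≠ 0 := by positivity
    have h2 : (2*(k:ℝ)+β) ≠ 0 := by positivity
    field_simp
    ring
  · have h0 : ∑ a ∈ Finset.range j, (gP β j).coeff a *
        (2*((a:ℝ)+β+1)*((k:ℝ)+β) * dP ((a:ℕ):ℝ) (k-1)
          / ((((k:ℝ)+(a:ℝ)+β+1) * ((k:ℝ)+(a:ℝ)+β)) * dP ((k:ℝ)+(a:ℝ)+β-1) (k-1))) = 0 := by
      refine Finset.sum_eq_zero fun a ha => ?_
      rw [dP_nat_zero (show a < k - 1 by have := Finset.mem_range.mp ha; omega)]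
      simp
    rw [Ival hβ hk hj, h0, mul_zero]
    simp [(Nat.ne_of_lt hgt).symm]
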